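/- Let Λ = ℤ⁸ carry the symmetric bilinear form ⟨x,y⟩ = Σ_{i=0}^{3} (x_{2i}·y_{2i+1} + x_{2i+1}·y_{2i}) (the orthogonal direct sum of four hyperbolic planes, i.e. the Mukai lattice of an abelian surface). Let v ∈ Λ be primitive with ⟨v,v⟩ = 6. Let w ∈ Λ be primitive with ⟨w,v⟩ = 0 and ⟨w,w⟩ < 0, and assume there exists s ∈ Λ lying in the saturation of the subgroup ℤv + ℤw such that 0 ≤ ⟨s,s⟩, ⟨s,s⟩ < ⟨s,v⟩, and 2·⟨s,v⟩ ≤ 6 + ⟨s,s⟩. Then ⟨w,w⟩ = -6 and the divisibility of w in v^⊥ (the nonnegative generator of the subgroup {⟨w,x⟩ : x ∈ Λ, ⟨x,v⟩ = 0} of ℤ) belongs to {2, 3, 6}. -/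

import Mathlib

/-- The Mukai pairing on `ℤ⁸`, the orthogonal direct sum of four hyperbolic planes
(the Mukai lattice of an abelian surface):
`⟨x,y⟩ = Σ_{i=0}^{3} (x_{2i}·y_{2i+1} + x_{2i+1}·y_{2i})`. -/
def mukaiForm (x y : Fin 8 → ℤ) : ℤ :=
  (x 0 * y 1 + x 1 * y 0) + (x 2 * y 3 + x 3 * y 2) +
  (x 4 * y 5 + x 5 * y 4) + (x 6 * y 7 + x 7 * y 6)

/-- An element of a free `ℤ`-module is primitive if it is not `k • u` with `k ≥ 2`. -/
def IsPrimitiveMukai (v : Fin 8 → ℤ) : Prop :=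
  ¬ ∃ (k : ℤ) (u : Fin 8 → ℤ), 2 ≤ k ∧ v = k • u

lemma mukai_symm (x y : Fin 8 → ℤ) : mukaiForm x y = mukaiForm y x := by
  unfold mukaiForm; ring

lemma mukai_even (x : Fin 8 → ℤ) :
    mukaiForm x x = 2 * (x 0 * x 1 + x 2 * x 3 + x 4 * x 5 + x 6 * x 7) := by
  unfold mukaiForm; ring

lemma mukai_comb {k a b : ℤ} {s v w : Fin 8 → ℤ} (h : k • s = a • v + b • w)
    (z : Fin 8 → ℤ) :
    k * mukaiForm s z = a * mukaiForm v z + b * mukaiForm w z := by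
  have hi : ∀ i, k * s i = a * v i + b * w i := by
    intro i
    have := congrFun h i
    simpa [Pi.smul_apply, Pi.add_apply, smul_eq_mul] using this
  unfold mukaiForm
  linear_combination (z 1) * hi 0 + (z 0) * hi 1 + (z 3) * hi 2 + (z 2) * hi 3 +
    (z 5) * hi 4 + (z 4) * hi 5 + (z 7) * hi 6 + (z 6) * hi 7

lemma int_bez (x y : ℤ) : ∃ p q : ℤ, p * x + q * y = Int.gcd x y :=
  ⟨Int.gcdA x y, Int.gcdB x y, by rw [Int.gcd_eq_gcd_ab]; ring⟩

lemma exists_mukai_one (w : Fin 8 → ℤ) (hw : IsPrimitiveMukai w) :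
    ∃ z : Fin 8 → ℤ, mukaiForm w z = 1 := by
  set g7 : ℕ := Int.gcd (w 6) (w 7) with hg7
  set g6 : ℕ := Int.gcd (w 5) (g7 : ℤ) with hg6
  set g5 : ℕ := Int.gcd (w 4) (g6 : ℤ) with hg5
  set g4 : ℕ := Int.gcd (w 3) (g5 : ℤ) with hg4
  set g3 : ℕ := Int.gcd (w 2) (g4 : ℤ) with hg3
  set g2 : ℕ := Int.gcd (w 1) (g3 : ℤ) with hg2
  set G : ℕ := Int.gcd (w 0) (g2 : ℤ) with hG
  -- divisibility of G into each coordinate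
  have d7 : ((g7:ℤ)) ∣ w 7 := (Int.gcd_dvd_right _ _)
  have d6 : ((g7:ℤ)) ∣ w 6 := (Int.gcd_dvd_left _ _)
  have e6 : ((g6:ℤ)) ∣ (g7:ℤ) := (Int.gcd_dvd_right _ _)
  have e5 : ((g5:ℤ)) ∣ (g6:ℤ) := (Int.gcd_dvd_right _ _)
  have e4 : ((g4:ℤ)) ∣ (g5:ℤ) := (Int.gcd_dvd_right _ _)
  have e3 : ((g3:ℤ)) ∣ (g4:ℤ) := (Int.gcd_dvd_right _ _)
  have e2 : ((g2:ℤ)) ∣ (g3:ℤ) := (Int.gcd_dvd_right _ _)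
  have eG : ((G:ℤ)) ∣ (g2:ℤ) := (Int.gcd_dvd_right _ _)
  have hGg3 : ((G:ℤ)) ∣ (g3:ℤ) := eG.trans e2
  have hGg4 : ((G:ℤ)) ∣ (g4:ℤ) := hGg3.trans e3
  have hGg5 : ((G:ℤ)) ∣ (g5:ℤ) := hGg4.trans e4
  have hGg6 : ((G:ℤ)) ∣ (g6:ℤ) := hGg5.trans e5
  have hGg7 : ((G:ℤ)) ∣ (g7:ℤ) := hGg6.trans e6
  have hdvd : ∀ i, ((G:ℤ)) ∣ w i := by
    intro i
    fin_cases i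
    · exact (Int.gcd_dvd_left _ _)
    · exact eG.trans (Int.gcd_dvd_left _ _)
    · exact hGg3.trans (Int.gcd_dvd_left _ _)
    · exact hGg4.trans (Int.gcd_dvd_left _ _)
    · exact hGg5.trans (Int.gcd_dvd_left _ _)
    · exact hGg6.trans (Int.gcd_dvd_left _ _)
    · exact hGg7.trans d6
    · exact hGg7.trans d7
  have hG1 : G = 1 := by
    rcases Nat.lt_or_ge G 2 with h2 | h2
    · interval_cases G
      · exfalso
        apply hw
        refine ⟨2, 0, by norm_num, ?_⟩
        funext i
        have h0 : w i = 0 := by simpa using hdvd i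
        simp [h0]
      · rfl
    · exfalso
      apply hw
      refine ⟨(G:ℤ), fun i => w i / (G:ℤ), by exact_mod_cast h2, ?_⟩
      funext i
      simp only [Pi.smul_apply, smul_eq_mul]
      exact (Int.mul_ediv_cancel' (hdvd i)).symm
  -- Bezout chain
  obtain ⟨p6, q6, h67⟩ := int_bez (w 6) (w 7)
  obtain ⟨p5, q5, h5⟩ := int_bez (w 5) (g7 : ℤ)
  obtain ⟨p4, q4, h4⟩ := int_bez (w 4) (g6 : ℤ)
  obtain ⟨p3, q3, h3⟩ := int_bez (w 3) (g5 : ℤ)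
  obtain ⟨p2, q2, h2'⟩ := int_bez (w 2) (g4 : ℤ)
  obtain ⟨p1, q1, h1⟩ := int_bez (w 1) (g3 : ℤ)
  obtain ⟨p0, q0, h0⟩ := int_bez (w 0) (g2 : ℤ)
  rw [← hg7] at h67
  rw [← hg6] at h5
  rw [← hg5] at h4
  rw [← hg4] at h3
  rw [← hg3] at h2'
  rw [← hg2] at h1
  rw [← hG, hG1] at h0
  -- combined coefficients
  refine ⟨![q0*p1, p0, q0*q1*q2*p3, q0*q1*p2, q0*q1*q2*q3*q4*p5, q0*q1*q2*q3*p4,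
          q0*q1*q2*q3*q4*q5*q6, q0*q1*q2*q3*q4*q5*p6], ?_⟩
  show (w 0 * p0 + w 1 * (q0*p1)) + (w 2 * (q0*q1*p2) + w 3 * (q0*q1*q2*p3)) +
       (w 4 * (q0*q1*q2*q3*p4) + w 5 * (q0*q1*q2*q3*q4*p5)) +
       (w 6 * (q0*q1*q2*q3*q4*q5*p6) + w 7 * (q0*q1*q2*q3*q4*q5*q6)) = 1
  push_cast at h0 h1 h2' h3 h4 h5 h67
  linear_combination h0 + q0*h1 + q0*q1*h2' + q0*q1*q2*h3 + q0*q1*q2*q3*h4 +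
    q0*q1*q2*q3*q4*h5 + q0*q1*q2*q3*q4*q5*h67

lemma finish_bW (b W : ℤ) (h : b^2 * W = -6) (hW : W < 0) :
    W = -6 ∧ (b = 1 ∨ b = -1) := by
  have h2 : b^2 * (-W) = 6 := by linarith
  have hWge : 1 ≤ -W := by omega
  have hb2 : b^2 ≤ 6 := by nlinarith [sq_nonneg b]
  have hbl : -2 ≤ b := by nlinarith
  have hbr : b ≤ 2 := by nlinarith
  interval_cases b <;> norm_num at h <;> norm_num <;> omega

lemma arith_core (k t σ u W a b : ℤ) (hk : 1 ≤ k)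
    (e1 : k * t = 6 * a) (e2 : k * u = b * W) (e3 : k * σ = a * t + b * u)
    (hgcd : Int.gcd k a = 1)
    (heven : 2 ∣ σ) (h0 : 0 ≤ σ) (h1 : σ < t) (h2 : 2 * t ≤ 6 + σ) (hW : W < 0) :
    W = -6 ∧ (k = 2 ∨ k = 3 ∨ k = 6) ∧ (b = 1 ∨ b = -1) := by
  have hco : IsCoprime k a := Int.isCoprime_iff_gcd_eq_one.mpr hgcd
  have hk6 : k ∣ 6 := hco.dvd_of_dvd_mul_right ⟨t, e1.symm⟩
  have hkle : k ≤ 6 := Int.le_of_dvd (by norm_num) hk6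
  have key : 6 * (b^2 * W) = k^2 * (6 * σ - t^2) := by
    linear_combination (-6*k)*e3 + (-6*b)*e2 + (k*t)*e1
  have ht1 : 1 ≤ t := by omega
  have ht5 : t ≤ 5 := by omega
  have hs4 : σ ≤ 4 := by omega
  interval_cases t <;> interval_cases σ <;> interval_cases k <;>
    first
    | omega
    | (have ha : a = 2 := by omega
       rw [ha] at hgcd
       exact absurd hgcd (by decide))
    | (have ha : a = 3 := by omega
       rw [ha] at hgcd
       exact absurd hgcd (by decide))
    | (have ha : a = 4 := by omega
       rw [ha] at hgcd
       exact absurd hgcd (by decide))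
    | (have hX : b^2 * W ≤ 0 := mul_nonpos_of_nonneg_of_nonpos (sq_nonneg b) hW.le
       linarith)
    | (have hbW : b^2 * W = -6 := by linarith
       obtain ⟨hW6, hb⟩ := finish_bW b W hbW hW
       exact ⟨hW6, by norm_num, hb⟩)

/-- **Wall divisors of generalized Kummer fourfolds** (lattice-theoretic content).
Let `v` be primitive of square `6` in the Mukai lattice, `w` primitive, orthogonal
to `v`, of negative square, and suppose some `s` in the saturation of `ℤv + ℤw`
satisfies `0 ≤ ⟨s,s⟩ < ⟨s,v⟩` and `2⟨s,v⟩ ≤ 6 + ⟨s,s⟩`.  Then `⟨w,w⟩ = -6` and the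
divisibility of `w` in `v^⊥` belongs to `{2, 3, 6}`. -/
theorem wall_divisor_square_and_divisibility
    (v w : Fin 8 → ℤ)
    (hv : IsPrimitiveMukai v) (hvv : mukaiForm v v = 6)
    (hw : IsPrimitiveMukai w) (hwv : mukaiForm w v = 0) (hww : mukaiForm w w < 0)
    (hs : ∃ s : Fin 8 → ℤ,
      (∃ k : ℤ, 1 ≤ k ∧ ∃ a b : ℤ, k • s = a • v + b • w) ∧
      0 ≤ mukaiForm s s ∧ mukaiForm s s < mukaiForm s v ∧
      2 * mukaiForm s v ≤ 6 + mukaiForm s s)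
    (d : ℤ) (hd0 : 0 ≤ d)
    (hdgen : AddSubgroup.zmultiples d =
      AddSubgroup.closure {t : ℤ | ∃ x : Fin 8 → ℤ, mukaiForm x v = 0 ∧ t = mukaiForm w x}) :
    mukaiForm w w = -6 ∧ (d = 2 ∨ d = 3 ∨ d = 6) := by
  classical
  obtain ⟨s, ⟨k₀, hk₀, a₀, b₀, hcomb₀⟩, hσ0, hσt, h2t⟩ := hs
  obtain ⟨zw, hzw⟩ := exists_mukai_one w hw
  -- minimal positive multiplier
  have hPex : ∃ n : ℕ, 0 < n ∧ ∃ a b : ℤ, (n : ℤ) • s = a • v + b • w := by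
    refine ⟨k₀.toNat, by omega, a₀, b₀, ?_⟩
    rw [Int.toNat_of_nonneg (by omega)]
    exact hcomb₀
  obtain ⟨hnpos, a, b, hcomb⟩ := Nat.find_spec hPex
  set n : ℕ := Nat.find hPex with hn
  have hmin : ∀ m, m < n → ¬ (0 < m ∧ ∃ a b : ℤ, (m : ℤ) • s = a • v + b • w) :=
    fun m hm => Nat.find_min hPex hm
  set k : ℤ := (n : ℤ) with hkdef
  have hk1 : 1 ≤ k := by rw [hkdef]; exact_mod_cast hnpos
  have hz : ∀ z, k * mukaiForm s z = a * mukaiForm v z + b * mukaiForm w z :=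
    fun z => mukai_comb hcomb z
  -- gcd(k, a) = 1 by minimality
  have hgcd : Int.gcd k a = 1 := by
    by_contra hne
    have hgpos : 0 < Int.gcd k a := Int.gcd_pos_iff.mpr (Or.inl (by omega))
    set g : ℕ := Int.gcd k a with hg
    have hgk : (g:ℤ) ∣ k := (Int.gcd_dvd_left _ _)
    have hga : (g:ℤ) ∣ a := (Int.gcd_dvd_right _ _)
    have hgb : (g:ℤ) ∣ b := by
      have h1 := hz zw
      rw [hzw, mul_one] at h1
      have hb' : b = k * mukaiForm s zw - a * mukaiForm v zw := by linarith
      rw [hb']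
      exact dvd_sub (hgk.mul_right _) (hga.mul_right _)
    have hg2 : 2 ≤ g := by omega
    obtain ⟨k₁, hk₁⟩ := hgk
    obtain ⟨a₁, ha₁⟩ := hga
    obtain ⟨b₁, hb₁⟩ := hgb
    have hgne : (g:ℤ) ≠ 0 := by exact_mod_cast hgpos.ne'
    have hk₁pos : 0 < k₁ := by nlinarith
    have hcomb₁ : k₁ • s = a₁ • v + b₁ • w := by
      funext i
      have hii := congrFun hcomb i
      simp only [Pi.smul_apply, Pi.add_apply, smul_eq_mul] at hii ⊢
      apply mul_left_cancel₀ hgne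
      calc (g:ℤ) * (k₁ * s i) = k * s i := by rw [hk₁]; ring
        _ = a * v i + b * w i := hii
        _ = (g:ℤ) * (a₁ * v i + b₁ * w i) := by rw [ha₁, hb₁]; ring
    have hk₁k : k₁ < k := by nlinarith
    have hlt : k₁.toNat < n := by omega
    refine hmin k₁.toNat hlt ⟨by omega, a₁, b₁, ?_⟩
    rw [Int.toNat_of_nonneg hk₁pos.le]
    exact hcomb₁
  -- the three pairing equations
  have hvw : mukaiForm v w = 0 := by rw [mukai_symm]; exact hwv
  have e1 : k * mukaiForm s v = 6 * a := by
    have h1 := hz v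
    rw [hvv, hwv] at h1
    linarith
  have e2 : k * mukaiForm s w = b * mukaiForm w w := by
    have h1 := hz w
    rw [hvw] at h1
    linarith
  have e3 : k * mukaiForm s s = a * mukaiForm s v + b * mukaiForm s w := by
    have h1 := hz s
    rw [mukai_symm v s, mukai_symm w s] at h1
    linarith
  have heven : (2:ℤ) ∣ mukaiForm s s := ⟨_, mukai_even s⟩
  obtain ⟨hW6, hk236, hb1⟩ :=
    arith_core k (mukaiForm s v) (mukaiForm s s) (mukaiForm s w) (mukaiForm w w) a b
      hk1 e1 e2 e3 hgcd heven hσ0 hσt h2t hww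
  refine ⟨hW6, ?_⟩
  -- divisibility part
  have hd6 : d ∣ 6 := by
    have hmem : (-6 : ℤ) ∈
        AddSubgroup.closure {t : ℤ | ∃ x : Fin 8 → ℤ, mukaiForm x v = 0 ∧ t = mukaiForm w x} :=
      AddSubgroup.subset_closure ⟨w, hwv, hW6.symm⟩
    rw [← hdgen, Int.mem_zmultiples_iff] at hmem
    exact (dvd_neg.mp hmem)
  have hkd : k ∣ d := by
    have hd_mem : d ∈ AddSubgroup.zmultiples d := AddSubgroup.mem_zmultiples d
    rw [hdgen] at hd_mem
    have hle : AddSubgroup.closure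
        {t : ℤ | ∃ x : Fin 8 → ℤ, mukaiForm x v = 0 ∧ t = mukaiForm w x} ≤
        AddSubgroup.zmultiples k := by
      rw [AddSubgroup.closure_le]
      rintro τ ⟨x, hxv, rfl⟩
      have h1 := hz x
      have hvx : mukaiForm v x = 0 := by rw [mukai_symm]; exact hxv
      rw [hvx, mul_zero, zero_add] at h1
      have : mukaiForm w x = k * (b * mukaiForm s x) := by
        rcases hb1 with rfl | rfl <;> linarith
      simp only [SetLike.mem_coe, Int.mem_zmultiples_iff]
      exact ⟨b * mukaiForm s x, this⟩
    have := hle hd_mem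
    rwa [Int.mem_zmultiples_iff] at this
  have hdne : d ≠ 0 := by
    rintro rfl
    norm_num at hd6
  have hd1 : 1 ≤ d := by omega
  have hdle : d ≤ 6 := Int.le_of_dvd (by norm_num) hd6
  interval_cases d <;> rcases hk236 with h | h | h <;> rw [h] at hkd <;> omega
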